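/- arXiv:1811.06268 — 2 statements merged into one kernel-verified Lean document; each statement's English description precedes it below -/
import Mathlib

section
/- The set of effective Kontsevich–Zagier periods is closed under addition and multiplication and contains 0 and 1; that is, it is a subring of ℂ. -/
open MeasureTheory

/-- The Boolean algebra of subsets of `ℝⁿ` generated by the sets
`{x | p(x) > 0}` for polynomials `p` with coefficients in `F ⊆ ℝ`. -/
inductive IsSemiAlgebraic (F : Set ℝ) : (n : ℕ) → Set (Fin n → ℝ) → Prop
  | basic (n : ℕ) (p : MvPolynomial (Fin n) ℝ) (hp : ∀ m, MvPolynomial.coeff m p ∈ F) :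
      IsSemiAlgebraic F n {x | 0 < MvPolynomial.eval x p}
  | compl (n : ℕ) (s : Set (Fin n → ℝ)) :
      IsSemiAlgebraic F n s → IsSemiAlgebraic F n sᶜ
  | union (n : ℕ) (s t : Set (Fin n → ℝ)) :
      IsSemiAlgebraic F n s → IsSemiAlgebraic F n t → IsSemiAlgebraic F n (s ∪ t)

/-- The rational numbers, viewed as a subset of `ℝ`. -/
def ratCoeffs : Set ℝ := Set.range ((↑) : ℚ → ℝ)

namespace KZAux

open MvPolynomial

lemma sa_measurable {F : Set ℝ} {n : ℕ} {s : Set (Fin n → ℝ)} (h : IsSemiAlgebraic F n s) :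
    MeasurableSet s := by
  induction h with
  | basic p hp =>
      exact measurableSet_lt measurable_const (MvPolynomial.continuous_eval p).measurable
  | compl s _ ih => exact ih.compl
  | union s t _ _ ihs iht => exact ihs.union iht

lemma sa_inter {F n} {s t : Set (Fin n → ℝ)} (hs : IsSemiAlgebraic F n s)
    (ht : IsSemiAlgebraic F n t) : IsSemiAlgebraic F n (s ∩ t) := by
  rw [← compl_compl (s ∩ t), Set.compl_inter]
  exact .compl _ _ (.union _ _ _ (.compl _ _ hs) (.compl _ _ ht))

lemma sa_rat {n} (q : MvPolynomial (Fin n) ℚ) :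
    IsSemiAlgebraic ratCoeffs n {x | 0 < MvPolynomial.eval x (MvPolynomial.map (algebraMap ℚ ℝ) q)} :=
  .basic _ _ (fun m => ⟨MvPolynomial.coeff m q, by simp [MvPolynomial.coeff_map]⟩)

lemma sa_empty {n} : IsSemiAlgebraic ratCoeffs n (∅ : Set (Fin n → ℝ)) := by
  have h := sa_rat (n := n) 0
  simpa using h

lemma sa_univ {n} : IsSemiAlgebraic ratCoeffs n (Set.univ : Set (Fin n → ℝ)) := by
  have := IsSemiAlgebraic.compl _ _ (sa_empty (n := n))
  simpa using this

lemma sa_pullback {n} {s : Set (Fin n → ℝ)} (h : IsSemiAlgebraic ratCoeffs n s) :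
    ∀ {k : ℕ} (g : Fin n → Fin k), Function.Injective g →
      IsSemiAlgebraic ratCoeffs k ((fun x => x ∘ g) ⁻¹' s) := by
  induction h with
  | basic p hp =>
      intro k g hg
      have he : ((fun x : Fin k → ℝ => x ∘ g) ⁻¹' {x | 0 < eval x p})
          = {x | 0 < eval x (rename g p)} := by
        ext x; simp [eval_rename]
      rw [he]
      refine .basic _ _ (fun m => ?_)
      by_cases hm : coeff m (rename g p) = 0
      · rw [hm]; exact ⟨0, by norm_num⟩
      · obtain ⟨u, hu, -⟩ := coeff_rename_ne_zero _ _ _ hm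
        rw [← hu, coeff_rename_mapDomain g hg]
        exact hp u
  | compl s _ ih =>
      intro k g hg
      rw [Set.preimage_compl]
      exact .compl _ _ (ih g hg)
  | union s t _ _ ihs iht =>
      intro k g hg
      rw [Set.preimage_union]
      exact .union _ _ _ (ihs g hg) (iht g hg)

/-- slab: `a < x i < b`. -/
lemma sa_slab {n} (i : Fin n) (a b : ℚ) :
    IsSemiAlgebraic ratCoeffs n {x | x i ∈ Set.Ioo (a : ℝ) (b : ℝ)} := by
  have h1 := sa_rat (n := n) (X i - C a)
  have h2 := sa_rat (n := n) (C b - X i)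
  have := sa_inter h1 h2
  convert this using 1
  ext x
  simp [Set.mem_Ioo, sub_pos, and_comm]


lemma natAdd_inj (n m : ℕ) : Function.Injective (@Fin.natAdd n m) := by
  intro i j h
  have := congrArg Fin.val h
  simp only [Fin.coe_natAdd] at this
  exact Fin.ext (by omega)

def prodSet {n m : ℕ} (A : Set (Fin n → ℝ)) (B : Set (Fin m → ℝ)) : Set (Fin (n + m) → ℝ) :=
  {x | x ∘ Fin.castAdd m ∈ A ∧ x ∘ Fin.natAdd n ∈ B}

lemma sa_prodSet {n m} {A : Set (Fin n → ℝ)} {B : Set (Fin m → ℝ)}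
    (hA : IsSemiAlgebraic ratCoeffs n A) (hB : IsSemiAlgebraic ratCoeffs m B) :
    IsSemiAlgebraic ratCoeffs (n + m) (prodSet A B) :=
  sa_inter (sa_pullback hA _ (Fin.castAdd_injective _ _)) (sa_pullback hB _ (natAdd_inj _ _))

noncomputable def packEquiv (n m : ℕ) : ((Fin n → ℝ) × (Fin m → ℝ)) ≃ᵐ (Fin (n + m) → ℝ) :=
  (MeasurableEquiv.sumPiEquivProdPi (fun _ : Fin n ⊕ Fin m => ℝ)).symm.trans
    (MeasurableEquiv.piCongrLeft (fun _ => ℝ) finSumFinEquiv)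

lemma packEquiv_mp (n m : ℕ) : MeasurePreserving (packEquiv n m) volume volume :=
  (volume_measurePreserving_piCongrLeft (fun _ : Fin (n + m) => ℝ) finSumFinEquiv).comp
    (volume_measurePreserving_sumPiEquivProdPi_symm (fun _ : Fin n ⊕ Fin m => ℝ))

lemma packEquiv_left {n m : ℕ} (a : Fin n → ℝ) (b : Fin m → ℝ) (i : Fin n) :
    packEquiv n m (a, b) (Fin.castAdd m i) = a i := by
  rw [← finSumFinEquiv_apply_left]
  exact Equiv.piCongrLeft_sumInl (fun _ => ℝ) finSumFinEquiv a b i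

lemma packEquiv_right {n m : ℕ} (a : Fin n → ℝ) (b : Fin m → ℝ) (i : Fin m) :
    packEquiv n m (a, b) (Fin.natAdd n i) = b i := by
  rw [← finSumFinEquiv_apply_right]
  exact Equiv.piCongrLeft_sumInr (fun _ => ℝ) finSumFinEquiv a b i

lemma packEquiv_preimage {n m : ℕ} (A : Set (Fin n → ℝ)) (B : Set (Fin m → ℝ)) :
    (packEquiv n m) ⁻¹' (prodSet A B) = A ×ˢ B := by
  ext ⟨a, b⟩
  have h1 : packEquiv n m (a, b) ∘ Fin.castAdd m = a := funext fun i => packEquiv_left a b i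
  have h2 : packEquiv n m (a, b) ∘ Fin.natAdd n = b := funext fun i => packEquiv_right a b i
  simp [prodSet, h1, h2]

lemma vol_prodSet {n m : ℕ} (A : Set (Fin n → ℝ)) (B : Set (Fin m → ℝ)) :
    volume (prodSet A B) = volume A * volume B := by
  rw [← (packEquiv_mp n m).measure_preimage_equiv, packEquiv_preimage,
    MeasureTheory.Measure.volume_eq_prod, MeasureTheory.Measure.prod_prod]


lemma sa_biInter {n} {ι : Type} (t : Finset ι) (f : ι → Set (Fin n → ℝ))
    (h : ∀ i ∈ t, IsSemiAlgebraic ratCoeffs n (f i)) :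
    IsSemiAlgebraic ratCoeffs n (⋂ i ∈ t, f i) := by
  classical
  induction t using Finset.induction_on with
  | empty => simpa using sa_univ
  | insert _ _ hnot ih =>
      rw [Finset.set_biInter_insert]
      exact sa_inter (h _ (Finset.mem_insert_self _ _))
        (ih fun i hi => h i (Finset.mem_insert_of_mem hi))

/-- The open cube `(a, a+1)^n`. -/
def unitCube (a : ℚ) (n : ℕ) : Set (Fin n → ℝ) :=
  {x | ∀ i, x i ∈ Set.Ioo (a : ℝ) ((a : ℝ) + 1)}

lemma sa_unitCube (a : ℚ) (n : ℕ) : IsSemiAlgebraic ratCoeffs n (unitCube a n) := by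
  have h := sa_biInter (Finset.univ : Finset (Fin n))
    (fun i => {x | x i ∈ Set.Ioo (a : ℝ) ((a + 1 : ℚ) : ℝ)})
    (fun i _ => sa_slab i a (a + 1))
  have he : unitCube a n = ⋂ i ∈ (Finset.univ : Finset (Fin n)),
      {x : Fin n → ℝ | x i ∈ Set.Ioo (a : ℝ) ((a + 1 : ℚ) : ℝ)} := by
    ext x
    push_cast
    simp [unitCube]
  rwa [he]

lemma vol_unitCube (a : ℚ) (n : ℕ) : volume (unitCube a n) = 1 := by
  have he : unitCube a n = Set.pi Set.univ (fun _ : Fin n => Set.Ioo (a : ℝ) ((a : ℝ) + 1)) := by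
    ext x; simp [unitCube]
  rw [he, volume_pi_pi]
  simp

lemma mes_prodSet {n m} {A : Set (Fin n → ℝ)} {B : Set (Fin m → ℝ)}
    (hA : IsSemiAlgebraic ratCoeffs n A) (hB : IsSemiAlgebraic ratCoeffs m B) :
    MeasurableSet (prodSet A B) := sa_measurable (sa_prodSet hA hB)

lemma exists_sum {n m} {A : Set (Fin n → ℝ)} {B : Set (Fin m → ℝ)}
    (hA : IsSemiAlgebraic ratCoeffs n A) (hB : IsSemiAlgebraic ratCoeffs m B) :
    ∃ C : Set (Fin (n + m + 1) → ℝ), IsSemiAlgebraic ratCoeffs (n + m + 1) C ∧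
      volume C = volume A + volume B := by
  set S1 := prodSet (prodSet A (unitCube 0 m)) (unitCube 0 1) with hS1
  set S2 := prodSet (prodSet (unitCube 0 n) B) (unitCube 1 1) with hS2
  refine ⟨S1 ∪ S2, .union _ _ _
    (sa_prodSet (sa_prodSet hA (sa_unitCube 0 m)) (sa_unitCube 0 1))
    (sa_prodSet (sa_prodSet (sa_unitCube 0 n) hB) (sa_unitCube 1 1)), ?_⟩
  have hdisj : Disjoint S1 S2 := by
    rw [Set.disjoint_left]
    rintro x ⟨-, h1⟩ ⟨-, h2⟩
    have a1 := h1 0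
    have a2 := h2 0
    rw [Set.mem_Ioo] at a1 a2
    push_cast at a1 a2
    linarith [a1.2, a2.1]
  rw [measure_union hdisj (mes_prodSet (sa_prodSet (sa_unitCube 0 n) hB) (sa_unitCube 1 1)),
    hS1, hS2, vol_prodSet, vol_prodSet, vol_prodSet, vol_prodSet,
    vol_unitCube, vol_unitCube, vol_unitCube, vol_unitCube]
  ring

end KZAux

/-- A real number is a (real) effective Kontsevich–Zagier period if it is a difference
of Lebesgue volumes of two `ℚ`-semi-algebraic subsets of some `ℝⁿ` of finite volume. -/
def IsKZRealPeriod (x : ℝ) : Prop :=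
  ∃ (n : ℕ) (A B : Set (Fin n → ℝ)),
    IsSemiAlgebraic ratCoeffs n A ∧ IsSemiAlgebraic ratCoeffs n B ∧
    volume A < ⊤ ∧ volume B < ⊤ ∧
    x = (volume A).toReal - (volume B).toReal

/-- A complex number is an effective Kontsevich–Zagier period if its real and imaginary
parts both are. -/
def IsEffKZPeriod (z : ℂ) : Prop := IsKZRealPeriod z.re ∧ IsKZRealPeriod z.im

namespace KZAux

lemma KZ_zero : IsKZRealPeriod 0 :=
  ⟨0, ∅, ∅, sa_empty, sa_empty, by simp, by simp, by simp⟩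

lemma vol_univ_fin_zero : volume (Set.univ : Set (Fin 0 → ℝ)) = 1 := by
  rw [show (Set.univ : Set (Fin 0 → ℝ)) = Set.pi Set.univ (fun _ => Set.univ) by simp,
    volume_pi_pi]
  simp

lemma KZ_one : IsKZRealPeriod 1 := by
  refine ⟨0, Set.univ, ∅, sa_univ, sa_empty, ?_, by simp, ?_⟩ <;>
    simp [vol_univ_fin_zero]

lemma KZ_neg {x : ℝ} (h : IsKZRealPeriod x) : IsKZRealPeriod (-x) := by
  obtain ⟨n, A, B, hA, hB, vA, vB, hx⟩ := h
  exact ⟨n, B, A, hB, hA, vB, vA, by rw [hx]; ring⟩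

lemma KZ_add {x y : ℝ} (hx : IsKZRealPeriod x) (hy : IsKZRealPeriod y) :
    IsKZRealPeriod (x + y) := by
  obtain ⟨n, A1, B1, hA1, hB1, vA1, vB1, hx⟩ := hx
  obtain ⟨m, A2, B2, hA2, hB2, vA2, vB2, hy⟩ := hy
  obtain ⟨C, hC, hCv⟩ := exists_sum hA1 hA2
  obtain ⟨D, hD, hDv⟩ := exists_sum hB1 hB2
  refine ⟨n + m + 1, C, D, hC, hD, ?_, ?_, ?_⟩
  · rw [hCv]; exact ENNReal.add_lt_top.mpr ⟨vA1, vA2⟩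
  · rw [hDv]; exact ENNReal.add_lt_top.mpr ⟨vB1, vB2⟩
  · rw [hCv, hDv, ENNReal.toReal_add vA1.ne vA2.ne, ENNReal.toReal_add vB1.ne vB2.ne, hx, hy]
    ring

lemma KZ_mul {x y : ℝ} (hx : IsKZRealPeriod x) (hy : IsKZRealPeriod y) :
    IsKZRealPeriod (x * y) := by
  obtain ⟨n, A1, B1, hA1, hB1, vA1, vB1, hx⟩ := hx
  obtain ⟨m, A2, B2, hA2, hB2, vA2, vB2, hy⟩ := hy
  obtain ⟨C, hC, hCv⟩ := exists_sum (sa_prodSet hA1 hA2) (sa_prodSet hB1 hB2)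
  obtain ⟨D, hD, hDv⟩ := exists_sum (sa_prodSet hA1 hB2) (sa_prodSet hB1 hA2)
  rw [vol_prodSet, vol_prodSet] at hCv hDv
  refine ⟨n + m + (n + m) + 1, C, D, hC, hD, ?_, ?_, ?_⟩
  · rw [hCv]
    exact ENNReal.add_lt_top.mpr ⟨ENNReal.mul_lt_top vA1 vA2, ENNReal.mul_lt_top vB1 vB2⟩
  · rw [hDv]
    exact ENNReal.add_lt_top.mpr ⟨ENNReal.mul_lt_top vA1 vB2, ENNReal.mul_lt_top vB1 vA2⟩
  · rw [hCv, hDv, ENNReal.toReal_add (ENNReal.mul_lt_top vA1 vA2).ne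
      (ENNReal.mul_lt_top vB1 vB2).ne, ENNReal.toReal_add (ENNReal.mul_lt_top vA1 vB2).ne
      (ENNReal.mul_lt_top vB1 vA2).ne, ENNReal.toReal_mul, ENNReal.toReal_mul,
      ENNReal.toReal_mul, ENNReal.toReal_mul, hx, hy]
    ring

lemma Eff_zero : IsEffKZPeriod 0 := by
  constructor <;> simpa using KZ_zero

lemma Eff_one : IsEffKZPeriod 1 := by
  refine ⟨by simpa using KZ_one, by simpa using KZ_zero⟩

lemma Eff_add {z w : ℂ} (hz : IsEffKZPeriod z) (hw : IsEffKZPeriod w) :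
    IsEffKZPeriod (z + w) :=
  ⟨by simpa [Complex.add_re] using KZ_add hz.1 hw.1,
   by simpa [Complex.add_im] using KZ_add hz.2 hw.2⟩

lemma Eff_neg {z : ℂ} (hz : IsEffKZPeriod z) : IsEffKZPeriod (-z) :=
  ⟨by simpa [Complex.neg_re] using KZ_neg hz.1,
   by simpa [Complex.neg_im] using KZ_neg hz.2⟩

lemma Eff_mul {z w : ℂ} (hz : IsEffKZPeriod z) (hw : IsEffKZPeriod w) :
    IsEffKZPeriod (z * w) := by
  constructor
  · rw [Complex.mul_re, sub_eq_add_neg]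
    exact KZ_add (KZ_mul hz.1 hw.1) (KZ_neg (KZ_mul hz.2 hw.2))
  · rw [Complex.mul_im]
    exact KZ_add (KZ_mul hz.1 hw.2) (KZ_mul hz.2 hw.1)

end KZAux

/-- The set of effective Kontsevich–Zagier periods contains `0` and `1` and is closed
under addition and multiplication; indeed it is a subring of `ℂ`. -/
theorem effKZPeriods_subring :
    IsEffKZPeriod 0 ∧ IsEffKZPeriod 1 ∧
    (∀ z w : ℂ, IsEffKZPeriod z → IsEffKZPeriod w → IsEffKZPeriod (z + w)) ∧
    (∀ z w : ℂ, IsEffKZPeriod z → IsEffKZPeriod w → IsEffKZPeriod (z * w)) ∧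
    ∃ R : Subring ℂ, (R : Set ℂ) = {z : ℂ | IsEffKZPeriod z} := by
  refine ⟨KZAux.Eff_zero, KZAux.Eff_one, fun z w hz hw => KZAux.Eff_add hz hw,
    fun z w hz hw => KZAux.Eff_mul hz hw, ?_⟩
  refine ⟨{ carrier := {z : ℂ | IsEffKZPeriod z}
            zero_mem' := KZAux.Eff_zero
            one_mem' := KZAux.Eff_one
            add_mem' := fun hz hw => KZAux.Eff_add hz hw
            mul_mem' := fun hz hw => KZAux.Eff_mul hz hw
            neg_mem' := fun hz => KZAux.Eff_neg hz }, rfl⟩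
end

section
/- Galois theory in torsor form, finite level: let K ⊆ ℚ̄ be a finite Galois extension of ℚ inside a fixed algebraic closure ℚ̄ of ℚ. Then the map K ⊗_ℚ ℚ̄ → Maps(Gal(K/ℚ), ℚ̄), sending λ ⊗ a to the function g ↦ a·g(λ) (where g(λ) ∈ K ⊆ ℚ̄), is an isomorphism of ℚ̄-algebras; here Maps(Gal(K/ℚ), ℚ̄) is the ℚ̄-algebra of all ℚ̄-valued functions on the finite group Gal(K/ℚ) with pointwise operations. -/
open TensorProduct

section Aux

variable (K : IntermediateField ℚ (AlgebraicClosure ℚ))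

private noncomputable abbrev galTorsor.σ (g : K ≃ₐ[ℚ] K) : K →ₐ[ℚ] AlgebraicClosure ℚ :=
  K.val.comp g.toAlgHom

/-- Dedekind linear independence of the embeddings `g : K → ℚ̄`. -/
private lemma galTorsor.dedekind :
    LinearIndependent (AlgebraicClosure ℚ)
      (fun g : K ≃ₐ[ℚ] K =>
        ((galTorsor.σ K g : K →* AlgebraicClosure ℚ) : K → AlgebraicClosure ℚ)) := by
  refine (linearIndependent_monoidHom K (AlgebraicClosure ℚ)).comp
    (fun g => (galTorsor.σ K g : K →* AlgebraicClosure ℚ)) ?_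
  intro g g' h
  ext l
  have := DFunLike.congr_fun h l
  exact this

end Aux

set_option maxHeartbeats 2000000 in
/-- Galois theory in torsor form, finite level: for a finite Galois subextension
`K ⊆ ℚ̄` of `ℚ`, the map `K ⊗_ℚ ℚ̄ → Maps(Gal(K/ℚ), ℚ̄)`, `λ ⊗ a ↦ (g ↦ a·g(λ))`
(with `g(λ) ∈ K ⊆ ℚ̄`), is an isomorphism of `ℚ̄`-algebras. -/
theorem galois_torsor_finite_level
    (K : IntermediateField ℚ (AlgebraicClosure ℚ))
    [FiniteDimensional ℚ K] [IsGalois ℚ K] :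
    ∃ Φ : (K ⊗[ℚ] (AlgebraicClosure ℚ)) →ₐ[ℚ] ((K ≃ₐ[ℚ] K) → AlgebraicClosure ℚ),
      (∀ (l : K) (a : AlgebraicClosure ℚ) (g : K ≃ₐ[ℚ] K),
        Φ (l ⊗ₜ[ℚ] a) g = a * algebraMap K (AlgebraicClosure ℚ) (g l)) ∧
      Function.Bijective Φ := by
  classical
  let Q := AlgebraicClosure ℚ
  let G := (K ≃ₐ[ℚ] K)
  let σ : G → (K →ₐ[ℚ] Q) := galTorsor.σ K
  have hσ : ∀ (g : G) (l : K), σ g l = algebraMap K Q (g l) := fun g l => rfl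
  -- the algebra hom
  let Φ : (K ⊗[ℚ] Q) →ₐ[ℚ] (G → Q) :=
    Pi.algHom ℚ _ fun g => Algebra.TensorProduct.productMap (σ g) (AlgHom.id ℚ Q)
  have hΦ : ∀ (l : K) (a : Q) (g : G),
      Φ (l ⊗ₜ[ℚ] a) g = a * algebraMap K Q (g l) := by
    intro l a g
    show Algebra.TensorProduct.productMap (σ g) (AlgHom.id ℚ Q) (l ⊗ₜ[ℚ] a)
        = a * algebraMap K Q (g l)
    rw [Algebra.TensorProduct.productMap_apply_tmul, AlgHom.coe_id, id_eq, hσ, mul_comm]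
  refine ⟨Φ, hΦ, ?_⟩
  -- the ℚ̄-linear version on ℚ̄ ⊗ K
  let n := Module.finrank ℚ K
  let b : Module.Basis (Fin n) ℚ K := Module.finBasis ℚ K
  let inner : K →ₗ[ℚ] (G → Q) := LinearMap.pi fun g => (σ g).toLinearMap
  have hinner : ∀ (l : K) (g : G), inner l g = algebraMap K Q (g l) := fun l g => rfl
  let B : Q →ₗ[Q] (K →ₗ[ℚ] (G → Q)) := LinearMap.smulRight (LinearMap.id : Q →ₗ[Q] Q) inner
  let L : (Q ⊗[ℚ] K) →ₗ[Q] (G → Q) := TensorProduct.AlgebraTensorModule.lift B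
  have hL : ∀ (a : Q) (l : K), L (a ⊗ₜ[ℚ] l) = a • inner l := fun a l => rfl
  -- Φ factors through L
  have key : ⇑Φ = ⇑L ∘ ⇑(TensorProduct.comm ℚ K Q) := by
    have : Φ.toLinearMap
        = (L.restrictScalars ℚ) ∘ₗ (TensorProduct.comm ℚ K Q).toLinearMap := by
      apply TensorProduct.ext'
      intro l a
      show Φ (l ⊗ₜ[ℚ] a) = L (a ⊗ₜ[ℚ] l)
      funext g
      rw [hΦ, hL]
      show a * algebraMap K Q (g l) = a • inner l g
      rw [hinner, smul_eq_mul]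
    funext x
    exact DFunLike.congr_fun this x
  rw [key]
  -- rows of the Galois matrix are linearly independent (Dedekind)
  have hrow : LinearIndependent Q (fun g : G => fun i : Fin n => algebraMap K Q (g (b i))) := by
    rw [Fintype.linearIndependent_iff]
    intro c hc
    have hded := Fintype.linearIndependent_iff.mp (galTorsor.dedekind K)
    refine hded c ?_
    have hv : (∑ g : G, c g • (σ g).toLinearMap : K →ₗ[ℚ] Q) = 0 := by
      refine b.ext fun i => ?_
      have h1 := congr_fun hc i
      rw [LinearMap.sum_apply, LinearMap.zero_apply]
      rw [Finset.sum_apply] at h1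
      simp only [Pi.smul_apply, smul_eq_mul, Pi.zero_apply] at h1
      simp only [LinearMap.smul_apply, AlgHom.toLinearMap_apply, smul_eq_mul, hσ]
      exact h1
    funext l
    have h2 := DFunLike.congr_fun hv l
    rw [LinearMap.sum_apply, LinearMap.zero_apply] at h2
    simp only [LinearMap.smul_apply, AlgHom.toLinearMap_apply, smul_eq_mul] at h2
    rw [Finset.sum_apply]
    simp only [Pi.smul_apply, smul_eq_mul, Pi.zero_apply]
    exact h2
  have hcardG : Fintype.card G = n := by
    rw [← Nat.card_eq_fintype_card]; exact IsGalois.card_aut_eq_finrank ℚ K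
  let e : Fin n ≃ G := (Fintype.equivFinOfCardEq hcardG).symm
  -- square matrix indexed by G
  let M : Matrix G G Q := Matrix.of fun g h => algebraMap K Q (g (b (e.symm h)))
  have hMrows : LinearIndependent Q (fun g : G => M g) := by
    have h2 := hrow.map' (LinearMap.funLeft Q Q e.symm)
      (LinearMap.ker_eq_bot.mpr (LinearMap.funLeft_injective_of_surjective Q Q _
        e.symm.surjective))
    exact h2
  have hMunit : IsUnit M := Matrix.linearIndependent_rows_iff_isUnit.mp hMrows
  have hMcols : LinearIndependent Q (fun h : G => M.transpose h) :=
    Matrix.linearIndependent_cols_iff_isUnit.mpr hMunit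
  have hcol : LinearIndependent Q (fun i : Fin n => fun g : G => algebraMap K Q (g (b i))) := by
    have h3 := hMcols.comp e e.injective
    have hfun : ((fun h : G => M.transpose h) ∘ e)
        = fun i : Fin n => fun g : G => algebraMap K Q (g (b i)) := by
      funext i g
      simp only [Function.comp_apply, Matrix.transpose_apply, M, Matrix.of_apply,
        Equiv.symm_apply_apply]
    rwa [hfun] at h3
  -- L is injective
  let Bb : Module.Basis (Fin n) Q (Q ⊗[ℚ] K) := Algebra.TensorProduct.basis Q b
  have hLB : ∀ i, L (Bb i) = fun g : G => algebraMap K Q (g (b i)) := by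
    intro i
    rw [show Bb i = (1 : Q) ⊗ₜ[ℚ] b i from Algebra.TensorProduct.basis_apply b i, hL, one_smul]
    funext g
    exact hinner (b i) g
  have hLinj : Function.Injective L := by
    rw [← LinearMap.ker_eq_bot, Submodule.eq_bot_iff]
    intro x hx
    have hxr : ∑ i, Bb.repr x i • Bb i = x := Bb.sum_repr x
    have h0 : ∑ i, Bb.repr x i • (fun g : G => algebraMap K Q (g (b i))) = 0 := by
      calc ∑ i, Bb.repr x i • (fun g : G => algebraMap K Q (g (b i)))
          = ∑ i, Bb.repr x i • L (Bb i) := by simp_rw [hLB]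
        _ = L (∑ i, Bb.repr x i • Bb i) := by rw [map_sum]; simp_rw [map_smul]
        _ = 0 := by rw [hxr]; exact hx
    have hz := Fintype.linearIndependent_iff.mp hcol _ h0
    have hr0 : Bb.repr x = 0 := by ext i; exact hz i
    exact Bb.repr.map_eq_zero_iff.mp hr0
  -- L is surjective by dimension count
  haveI : Module.Finite Q (Q ⊗[ℚ] K) := Module.Finite.of_basis Bb
  have hdim : Module.finrank Q (Q ⊗[ℚ] K) = Module.finrank Q (G → Q) := by
    rw [Module.finrank_eq_card_basis Bb, Module.finrank_pi, hcardG, Fintype.card_fin]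
  have hLsurj : Function.Surjective L :=
    (LinearMap.injective_iff_surjective_of_finrank_eq_finrank hdim).mp hLinj
  exact Function.Bijective.comp ⟨hLinj, hLsurj⟩ (TensorProduct.comm ℚ K Q).bijective
end
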